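/- Let m, k, n be integers with 1 ≤ m ≤ k ≤ n and m < n. Then for every real y with mk/n ≤ y ≤ m, Σ_{τ=0}^{m} [C(n−m, k−τ) / ((n−m)^{m−τ} · C(n−m, k−m))] · [C(m,τ)/m^τ] · (k−y)^{m−τ} · y^τ ≤ (min{e, 1 + k/(k−m+1)})^m; consequently g(m,n,k)^{1/m} ≤ min{e, 1 + k/(k−m+1)}, where g(m,n,k) denotes the maximum of the left-hand side over y ∈ [mk/n, m]. -/

import Mathlib

open Matrix Finset

/-- `gval m n k` is the maximum over `y ∈ [mk/n, m]` of the bounding function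
appearing in the analysis of the proportional sampling algorithm. -/
noncomputable def gval (m n k : ℕ) : ℝ :=
  sSup ((fun y : ℝ => ∑ τ ∈ Finset.range (m + 1),
      (((n - m).choose (k - τ) : ℝ)
          / (((n - m : ℕ) : ℝ) ^ (m - τ) * ((n - m).choose (k - m) : ℝ)))
        * ((m.choose τ : ℝ) / (m : ℝ) ^ τ)
        * ((k : ℝ) - y) ^ (m - τ) * y ^ τ) ''
    Set.Icc ((m * k : ℝ) / (n : ℝ)) (m : ℝ))


open Real in

lemma natA1 (N c : ℕ) : ∀ s, N.choose (c+s) * (c+1)^s ≤ N^s * N.choose c := by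
  intro s
  induction s with
  | zero => simp
  | succ s ih =>
    calc N.choose (c+(s+1)) * (c+1)^(s+1)
        = (N.choose (c+s+1) * (c+1)) * (c+1)^s := by ring_nf
      _ ≤ (N.choose (c+s+1) * (c+s+1)) * (c+1)^s := by gcongr; omega
      _ = (N.choose (c+s) * (N - (c+s))) * (c+1)^s := by rw [Nat.choose_succ_right_eq]
      _ ≤ (N.choose (c+s) * N) * (c+1)^s := by gcongr; omega
      _ = N * (N.choose (c+s) * (c+1)^s) := by ring
      _ ≤ N * (N^s * N.choose c) := by gcongr
      _ = N^(s+1) * N.choose c := by ring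

lemma natA2 (N c : ℕ) : ∀ s, N.choose (c+s) * (c+s).factorial ≤ N^s * (N.choose c * c.factorial) := by
  intro s
  induction s with
  | zero => simp
  | succ s ih =>
    calc N.choose (c+(s+1)) * (c+(s+1)).factorial
        = (N.choose (c+s+1) * (c+s+1)) * (c+s).factorial := by
          rw [show c+(s+1) = c+s+1 by ring, Nat.factorial_succ]; ring
      _ = (N.choose (c+s) * (N - (c+s))) * (c+s).factorial := by rw [Nat.choose_succ_right_eq]
      _ ≤ (N.choose (c+s) * N) * (c+s).factorial := by gcongr; omega
      _ = N * (N.choose (c+s) * (c+s).factorial) := by ring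
      _ ≤ N * (N^s * (N.choose c * c.factorial)) := by gcongr
      _ = N^(s+1) * (N.choose c * c.factorial) := by ring

lemma natB (c : ℕ) : ∀ s j, j ≤ s → s.choose j * j.factorial * (c^(s-j) * c.factorial) ≤ (c+s).factorial := by
  intro s
  induction s with
  | zero => intro j hj; interval_cases j; simp
  | succ s ih =>
    intro j hj
    match j with
    | 0 =>
      simp only [Nat.choose_zero_right, Nat.factorial_zero, Nat.one_mul, Nat.mul_one, Nat.sub_zero]
      calc c^(s+1) * c.factorial = c * (c^s * c.factorial) := by ring
        _ ≤ c * (c+s).factorial := by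
            have h0 := ih 0 (Nat.zero_le s)
            simp only [Nat.choose_zero_right, Nat.factorial_zero, Nat.one_mul, Nat.sub_zero] at h0
            exact Nat.mul_le_mul_left c h0
        _ ≤ (c+s+1) * (c+s).factorial := by gcongr; omega
        _ = (c+(s+1)).factorial := by rw [show c+(s+1) = c+s+1 by ring, Nat.factorial_succ]
    | j+1 =>
      have hj' : j ≤ s := by omega
      calc (s+1).choose (j+1) * (j+1).factorial * (c^(s+1-(j+1)) * c.factorial)
          = ((s+1).choose (j+1) * (j+1)) * j.factorial * (c^(s-j) * c.factorial) := by
            rw [Nat.factorial_succ, Nat.succ_sub_succ]; ring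
        _ = ((s+1) * s.choose j) * j.factorial * (c^(s-j) * c.factorial) := by
            rw [← Nat.add_one_mul_choose_eq]
        _ = (s+1) * (s.choose j * j.factorial * (c^(s-j) * c.factorial)) := by ring
        _ ≤ (s+1) * (c+s).factorial := Nat.mul_le_mul_left _ (ih j hj')
        _ ≤ (c+s+1) * (c+s).factorial := by gcongr; omega
        _ = (c+(s+1)).factorial := by rw [show c+(s+1) = c+s+1 by ring, Nat.factorial_succ]

lemma natC (m τ : ℕ) : m.choose τ * τ.factorial ≤ m ^ τ := by
  have h := Nat.descFactorial_le_pow m τ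
  rw [Nat.descFactorial_eq_factorial_mul_choose] at h
  calc m.choose τ * τ.factorial = τ.factorial * m.choose τ := by ring
    _ ≤ m ^ τ := h

lemma key (m k n : ℕ) (hm : 1 ≤ m) (hmk : m ≤ k) (hkn : k ≤ n) (hmn : m < n)
    (y : ℝ) (hy0 : 0 ≤ y) (hym : y ≤ (m : ℝ)) :
    ∑ τ ∈ Finset.range (m + 1),
        (((n - m).choose (k - τ) : ℝ)
            / (((n - m : ℕ) : ℝ) ^ (m - τ) * ((n - m).choose (k - m) : ℝ)))
          * ((m.choose τ : ℝ) / (m : ℝ) ^ τ)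
          * ((k : ℝ) - y) ^ (m - τ) * y ^ τ
      ≤ (min (Real.exp 1) (1 + (k : ℝ) / ((k : ℝ) - (m : ℝ) + 1))) ^ m := by
  set N := n - m with hN
  set c := k - m with hc
  have hN1 : 1 ≤ N := by omega
  have hcN : c ≤ N := by omega
  have hNpos : (0:ℝ) < (N:ℝ) := by exact_mod_cast hN1
  have hCc : (0:ℝ) < (N.choose c : ℝ) := by exact_mod_cast Nat.choose_pos hcN
  have hmR : (m:ℝ) ≤ (k:ℝ) := by exact_mod_cast hmk
  have hmpos : (0:ℝ) < (m:ℝ) := by exact_mod_cast hm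
  have hky : 0 ≤ (k:ℝ) - y := by linarith
  have hcR : ((c:ℕ):ℝ) = (k:ℝ) - (m:ℝ) := by
    rw [hc, Nat.cast_sub hmk]
  have hc1pos : (0:ℝ) < (c:ℝ) + 1 := by positivity
  -- branch 2 : exp bound
  have branch2 : ∑ τ ∈ Finset.range (m + 1),
        ((N.choose (k - τ) : ℝ) / ((N : ℝ) ^ (m - τ) * (N.choose c : ℝ)))
          * ((m.choose τ : ℝ) / (m : ℝ) ^ τ)
          * ((k : ℝ) - y) ^ (m - τ) * y ^ τ
      ≤ Real.exp 1 ^ m := by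
    have hstep : ∀ τ ∈ Finset.range (m+1),
        ((N.choose (k - τ) : ℝ) / ((N : ℝ) ^ (m - τ) * (N.choose c : ℝ)))
          * ((m.choose τ : ℝ) / (m : ℝ) ^ τ)
          * ((k : ℝ) - y) ^ (m - τ) * y ^ τ
        ≤ (y ^ τ / (τ.factorial : ℝ)) * Real.exp ((m:ℝ) - y) := by
      intro τ hτ
      have hτm : τ ≤ m := by simpa [Nat.lt_succ_iff] using Finset.mem_range.mp hτ
      set s := m - τ with hs
      have hks : k - τ = c + s := by omega
      rw [hks]
      have hA2 : (N.choose (c+s) : ℝ) / ((N : ℝ) ^ s * (N.choose c : ℝ))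
          ≤ (c.factorial : ℝ) / ((c+s).factorial : ℝ) := by
        rw [div_le_div_iff₀ (by positivity) (by positivity)]
        have h := natA2 N c s
        have : (N.choose (c+s) : ℝ) * ((c+s).factorial : ℝ)
            ≤ (N:ℝ)^s * ((N.choose c : ℝ) * (c.factorial : ℝ)) := by exact_mod_cast h
        nlinarith [this]
      have hB : (m.choose τ : ℝ) / (m : ℝ) ^ τ ≤ ((τ.factorial : ℝ))⁻¹ := by
        rw [div_le_iff₀ (by positivity), inv_mul_eq_div, le_div_iff₀ (by positivity)]
        have := natC m τ
        exact_mod_cast this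
      have hmy : 0 ≤ (m:ℝ) - y := by linarith
      have hKey : ((k:ℝ) - y) ^ s * ((c.factorial : ℝ) / ((c+s).factorial : ℝ))
          ≤ ∑ j ∈ Finset.range (s+1), ((m:ℝ) - y)^j / (j.factorial : ℝ) := by
        have hkmy : (k:ℝ) - y = ((m:ℝ) - y) + (c:ℝ) := by rw [hcR]; ring
        rw [hkmy, add_pow, Finset.sum_mul]
        apply Finset.sum_le_sum
        intro j hj
        have hjs : j ≤ s := by simpa [Nat.lt_succ_iff] using Finset.mem_range.mp hj
        have h1 : ((c:ℝ))^(s-j) * ((s.choose j : ℕ) : ℝ) * ((c.factorial : ℝ) / ((c+s).factorial : ℝ))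
            ≤ ((j.factorial : ℝ))⁻¹ := by
          rw [← mul_div_assoc, div_le_iff₀ (by positivity), inv_mul_eq_div,
            le_div_iff₀ (by positivity)]
          have h := natB c s j hjs
          have : ((s.choose j : ℕ) : ℝ) * (j.factorial : ℝ) * (((c:ℝ))^(s-j) * (c.factorial : ℝ))
              ≤ ((c+s).factorial : ℝ) := by exact_mod_cast h
          nlinarith [this]
        calc ((m:ℝ) - y)^j * (c:ℝ)^(s-j) * ((s.choose j : ℕ) : ℝ)
              * ((c.factorial : ℝ) / ((c+s).factorial : ℝ))
            = ((m:ℝ) - y)^j * ((c:ℝ)^(s-j) * ((s.choose j : ℕ) : ℝ)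
              * ((c.factorial : ℝ) / ((c+s).factorial : ℝ))) := by ring
          _ ≤ ((m:ℝ) - y)^j * ((j.factorial : ℝ))⁻¹ :=
              mul_le_mul_of_nonneg_left h1 (by positivity)
          _ = ((m:ℝ) - y)^j / (j.factorial : ℝ) := by rw [div_eq_mul_inv]
      have hfacpos : (0:ℝ) < ((c+s).factorial : ℝ) := by exact_mod_cast (c+s).factorial_pos
      calc ((N.choose (c+s) : ℝ) / ((N : ℝ) ^ s * (N.choose c : ℝ)))
            * ((m.choose τ : ℝ) / (m : ℝ) ^ τ) * ((k:ℝ) - y) ^ s * y ^ τ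
          = (((N.choose (c+s) : ℝ) / ((N : ℝ) ^ s * (N.choose c : ℝ)))
            * ((m.choose τ : ℝ) / (m : ℝ) ^ τ)) * (((k:ℝ) - y) ^ s * y ^ τ) := by ring
        _ ≤ (((c.factorial : ℝ) / ((c+s).factorial : ℝ)) * ((τ.factorial : ℝ))⁻¹)
            * (((k:ℝ) - y) ^ s * y ^ τ) := by
            apply mul_le_mul_of_nonneg_right _ (by positivity)
            exact mul_le_mul hA2 hB (by positivity) (by positivity)
        _ = (y ^ τ * ((τ.factorial : ℝ))⁻¹)
            * (((k:ℝ) - y) ^ s * ((c.factorial : ℝ) / ((c+s).factorial : ℝ))) := by ring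
        _ ≤ (y ^ τ * ((τ.factorial : ℝ))⁻¹)
            * (∑ j ∈ Finset.range (s+1), ((m:ℝ) - y)^j / (j.factorial : ℝ)) :=
            mul_le_mul_of_nonneg_left hKey (by positivity)
        _ ≤ (y ^ τ * ((τ.factorial : ℝ))⁻¹) * Real.exp ((m:ℝ) - y) :=
            mul_le_mul_of_nonneg_left (Real.sum_le_exp_of_nonneg hmy (s+1)) (by positivity)
        _ = (y ^ τ / (τ.factorial : ℝ)) * Real.exp ((m:ℝ) - y) := by rw [div_eq_mul_inv]
    calc ∑ τ ∈ Finset.range (m + 1),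
          ((N.choose (k - τ) : ℝ) / ((N : ℝ) ^ (m - τ) * (N.choose c : ℝ)))
            * ((m.choose τ : ℝ) / (m : ℝ) ^ τ) * ((k : ℝ) - y) ^ (m - τ) * y ^ τ
        ≤ ∑ τ ∈ Finset.range (m + 1), (y ^ τ / (τ.factorial : ℝ)) * Real.exp ((m:ℝ) - y) :=
          Finset.sum_le_sum hstep
      _ = (∑ τ ∈ Finset.range (m + 1), y ^ τ / (τ.factorial : ℝ)) * Real.exp ((m:ℝ) - y) := by
          rw [Finset.sum_mul]
      _ ≤ Real.exp y * Real.exp ((m:ℝ) - y) :=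
          mul_le_mul_of_nonneg_right (Real.sum_le_exp_of_nonneg hy0 (m+1)) (Real.exp_nonneg _)
      _ = Real.exp ((m:ℕ):ℝ) := by rw [← Real.exp_add]; ring_nf
      _ = Real.exp 1 ^ m := by rw [Real.exp_one_pow]
  -- branch 1 : polynomial bound
  have branch1 : ∑ τ ∈ Finset.range (m + 1),
        ((N.choose (k - τ) : ℝ) / ((N : ℝ) ^ (m - τ) * (N.choose c : ℝ)))
          * ((m.choose τ : ℝ) / (m : ℝ) ^ τ)
          * ((k : ℝ) - y) ^ (m - τ) * y ^ τ
      ≤ (1 + (k : ℝ) / ((k : ℝ) - (m : ℝ) + 1)) ^ m := by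
    have hstep : ∀ τ ∈ Finset.range (m+1),
        ((N.choose (k - τ) : ℝ) / ((N : ℝ) ^ (m - τ) * (N.choose c : ℝ)))
          * ((m.choose τ : ℝ) / (m : ℝ) ^ τ) * ((k : ℝ) - y) ^ (m - τ) * y ^ τ
        ≤ (y / (m:ℝ)) ^ τ * (((k:ℝ) - y) / ((c:ℝ)+1)) ^ (m - τ) * (m.choose τ : ℝ) := by
      intro τ hτ
      have hτm : τ ≤ m := by simpa [Nat.lt_succ_iff] using Finset.mem_range.mp hτ
      set s := m - τ with hs
      have hks : k - τ = c + s := by omega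
      rw [hks]
      have hA : (N.choose (c+s) : ℝ) / ((N : ℝ) ^ s * (N.choose c : ℝ))
          ≤ (((c:ℝ)+1)⁻¹) ^ s := by
        rw [inv_pow, div_le_iff₀ (by positivity), inv_mul_eq_div, le_div_iff₀ (by positivity)]
        have h := natA1 N c s
        have : (N.choose (c+s) : ℝ) * ((c:ℝ)+1)^s ≤ (N:ℝ)^s * (N.choose c : ℝ) := by
          exact_mod_cast h
        nlinarith [this]
      calc ((N.choose (c+s) : ℝ) / ((N : ℝ) ^ s * (N.choose c : ℝ)))
            * ((m.choose τ : ℝ) / (m : ℝ) ^ τ) * ((k:ℝ) - y) ^ s * y ^ τ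
          = ((N.choose (c+s) : ℝ) / ((N : ℝ) ^ s * (N.choose c : ℝ)))
            * (((m.choose τ : ℝ) / (m : ℝ) ^ τ) * ((k:ℝ) - y) ^ s * y ^ τ) := by ring
        _ ≤ (((c:ℝ)+1)⁻¹) ^ s
            * (((m.choose τ : ℝ) / (m : ℝ) ^ τ) * ((k:ℝ) - y) ^ s * y ^ τ) := by
            apply mul_le_mul_of_nonneg_right hA (by positivity)
        _ = (y / (m:ℝ)) ^ τ * (((k:ℝ) - y) / ((c:ℝ)+1)) ^ s * (m.choose τ : ℝ) := by
            have hm0 : ((m:ℝ))^τ ≠ 0 := by positivity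
            have hc0 : ((c:ℝ)+1) ≠ 0 := by positivity
            rw [div_pow, div_pow, inv_pow]
            ring
    calc ∑ τ ∈ Finset.range (m + 1),
          ((N.choose (k - τ) : ℝ) / ((N : ℝ) ^ (m - τ) * (N.choose c : ℝ)))
            * ((m.choose τ : ℝ) / (m : ℝ) ^ τ) * ((k : ℝ) - y) ^ (m - τ) * y ^ τ
        ≤ ∑ τ ∈ Finset.range (m + 1),
            (y / (m:ℝ)) ^ τ * (((k:ℝ) - y) / ((c:ℝ)+1)) ^ (m - τ) * (m.choose τ : ℝ) :=
          Finset.sum_le_sum hstep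
      _ = (y / (m:ℝ) + ((k:ℝ) - y) / ((c:ℝ)+1)) ^ m := (add_pow _ _ m).symm
      _ ≤ (1 + (k : ℝ) / ((k : ℝ) - (m : ℝ) + 1)) ^ m := by
          apply pow_le_pow_left₀
          · positivity
          · rw [← hcR]
            have h1 : y / (m:ℝ) ≤ 1 := by rw [div_le_one hmpos]; exact hym
            have h2 : ((k:ℝ) - y) / ((c:ℝ) + 1) ≤ (k:ℝ) / ((c:ℝ) + 1) := by
              gcongr
              linarith
            linarith
  rcases le_total (Real.exp 1) (1 + (k : ℝ) / ((k : ℝ) - (m : ℝ) + 1)) with h | h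
  · rw [min_eq_left h]; exact branch2
  · rw [min_eq_right h]; exact branch1

/-- The bounding function is at most `(min{e, 1 + k/(k-m+1)})^m` on `[mk/n, m]`;
consequently `g(m,n,k)^{1/m} ≤ min{e, 1 + k/(k-m+1)}`. -/
theorem stmt4 (m k n : ℕ) (hm : 1 ≤ m) (hmk : m ≤ k) (hkn : k ≤ n) (hmn : m < n) :
    (∀ y : ℝ, (m * k : ℝ) / (n : ℝ) ≤ y → y ≤ (m : ℝ) →
      ∑ τ ∈ Finset.range (m + 1),
          (((n - m).choose (k - τ) : ℝ)
              / (((n - m : ℕ) : ℝ) ^ (m - τ) * ((n - m).choose (k - m) : ℝ)))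
            * ((m.choose τ : ℝ) / (m : ℝ) ^ τ)
            * ((k : ℝ) - y) ^ (m - τ) * y ^ τ
        ≤ (min (Real.exp 1) (1 + (k : ℝ) / ((k : ℝ) - (m : ℝ) + 1))) ^ m)
    ∧ gval m n k ^ ((1 : ℝ) / (m : ℝ))
        ≤ min (Real.exp 1) (1 + (k : ℝ) / ((k : ℝ) - (m : ℝ) + 1)) := by
  have hmR : (m:ℝ) ≤ (k:ℝ) := by exact_mod_cast hmk
  have hmpos : (0:ℝ) < (m:ℝ) := by exact_mod_cast hm
  have hnpos : (0:ℝ) < (n:ℝ) := by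
    have : 0 < n := by omega
    exact_mod_cast this
  have hq0 : (0:ℝ) ≤ (m * k : ℝ) / (n : ℝ) := by positivity
  have hpt : ∀ y : ℝ, (m * k : ℝ) / (n : ℝ) ≤ y → y ≤ (m : ℝ) →
      ∑ τ ∈ Finset.range (m + 1),
          (((n - m).choose (k - τ) : ℝ)
              / (((n - m : ℕ) : ℝ) ^ (m - τ) * ((n - m).choose (k - m) : ℝ)))
            * ((m.choose τ : ℝ) / (m : ℝ) ^ τ)
            * ((k : ℝ) - y) ^ (m - τ) * y ^ τ
        ≤ (min (Real.exp 1) (1 + (k : ℝ) / ((k : ℝ) - (m : ℝ) + 1))) ^ m := by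
    intro y hy1 hy2
    exact key m k n hm hmk hkn hmn y (le_trans hq0 hy1) hy2
  refine ⟨hpt, ?_⟩
  set M := min (Real.exp 1) (1 + (k : ℝ) / ((k : ℝ) - (m : ℝ) + 1)) with hM
  have hM1 : (1:ℝ) ≤ M := by
    apply le_min
    · exact Real.one_le_exp zero_le_one
    · have hd : (0:ℝ) < (k:ℝ) - (m:ℝ) + 1 := by linarith
      have : (0:ℝ) ≤ (k:ℝ) / ((k:ℝ) - (m:ℝ) + 1) := by positivity
      linarith
  have hM0 : (0:ℝ) ≤ M := by linarith
  have hmem : (m:ℝ) ∈ Set.Icc ((m * k : ℝ) / (n : ℝ)) (m : ℝ) := by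
    constructor
    · rw [div_le_iff₀ hnpos]
      have : (m:ℝ) * (k:ℝ) ≤ (m:ℝ) * (n:ℝ) := by
        apply mul_le_mul_of_nonneg_left _ (le_of_lt hmpos)
        exact_mod_cast hkn
      push_cast
      linarith
    · exact le_refl _
  set f : ℝ → ℝ := fun y : ℝ => ∑ τ ∈ Finset.range (m + 1),
      (((n - m).choose (k - τ) : ℝ)
          / (((n - m : ℕ) : ℝ) ^ (m - τ) * ((n - m).choose (k - m) : ℝ)))
        * ((m.choose τ : ℝ) / (m : ℝ) ^ τ)
        * ((k : ℝ) - y) ^ (m - τ) * y ^ τ with hf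
  have hub : ∀ x ∈ f '' Set.Icc ((m * k : ℝ) / (n : ℝ)) (m : ℝ), x ≤ M ^ m := by
    rintro x ⟨y, hy, rfl⟩
    exact hpt y hy.1 hy.2
  have hne : (f '' Set.Icc ((m * k : ℝ) / (n : ℝ)) (m : ℝ)).Nonempty :=
    ⟨f m, Set.mem_image_of_mem f hmem⟩
  have hgle : gval m n k ≤ M ^ m := csSup_le hne hub
  have hfm0 : 0 ≤ f (m:ℝ) := by
    apply Finset.sum_nonneg
    intro τ hτ
    have hkm : (0:ℝ) ≤ (k:ℝ) - (m:ℝ) := by linarith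
    apply mul_nonneg
    apply mul_nonneg
    apply mul_nonneg
    · positivity
    · positivity
    · exact pow_nonneg hkm _
    · positivity
  have hg0 : 0 ≤ gval m n k :=
    le_trans hfm0 (le_csSup ⟨M ^ m, hub⟩ (Set.mem_image_of_mem f hmem))
  have hmne : ((m:ℝ)) ≠ 0 := ne_of_gt hmpos
  calc gval m n k ^ ((1:ℝ)/(m:ℝ))
      ≤ (M ^ m) ^ ((1:ℝ)/(m:ℝ)) := Real.rpow_le_rpow hg0 hgle (by positivity)
    _ = M := by
        rw [← Real.rpow_natCast M m, ← Real.rpow_mul hM0,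
          show (m:ℝ) * ((1:ℝ)/(m:ℝ)) = 1 by field_simp, Real.rpow_one]
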